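/- Let N ≥ 2, let A be a Hermitian N×N complex matrix with τ = tr A, let v ∈ ℂ^N be a unit vector with α = ⟨v, A v⟩, and assume α > 0, τ > 0 and Nα > τ. If the Choi matrix Z_A = (1/α)·A ⊗ P + (1/(N/τ − 1/α))·(𝟙 − A/α) ⊗ (𝟙/τ − P/α) is positive semidefinite, then A − ((τ − α)/(N − 1))·𝟙 is positive semidefinite. -/

import Mathlib

open Matrix Kronecker ComplexOrder

lemma quad_kron {N : ℕ} (M B : Matrix (Fin N) (Fin N) ℂ) (x y : Fin N → ℂ) :
    star (fun p : Fin N × Fin N => x p.1 * y p.2) ⬝ᵥ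
      (M ⊗ₖ B).mulVec (fun p : Fin N × Fin N => x p.1 * y p.2) =
    (star x ⬝ᵥ M.mulVec x) * (star y ⬝ᵥ B.mulVec y) := by
  have h1 : (M ⊗ₖ B).mulVec (fun p : Fin N × Fin N => x p.1 * y p.2) =
      fun p : Fin N × Fin N => (M.mulVec x p.1) * (B.mulVec y p.2) := by
    ext p
    simp only [mulVec, dotProduct, kroneckerMap_apply, Fintype.sum_prod_type]
    rw [Fintype.sum_mul_sum]
    exact Finset.sum_congr rfl fun k _ => Finset.sum_congr rfl fun l _ => by ring
  rw [h1]
  simp only [dotProduct, Pi.star_apply, star_mul', Fintype.sum_prod_type]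
  rw [Fintype.sum_mul_sum]
  exact Finset.sum_congr rfl fun k _ => Finset.sum_congr rfl fun l _ => by ring

/-- If the Choi matrix `Z_A` is positive semidefinite then
`A − ((τ − α)/(N − 1))·𝟙` is positive semidefinite. -/
theorem choi_posSemidef_lower_bound (N : ℕ) (hN : 2 ≤ N)
    (A : Matrix (Fin N) (Fin N) ℂ) (hA : A.IsHermitian)
    (v : Fin N → ℂ) (hv : star v ⬝ᵥ v = 1)
    (τ α : ℝ) (hτ : A.trace = (τ : ℂ)) (hα : star v ⬝ᵥ A.mulVec v = (α : ℂ))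
    (hα0 : 0 < α) (hτ0 : 0 < τ) (hNα : τ < (N : ℝ) * α)
    (P : Matrix (Fin N) (Fin N) ℂ) (hP : P = vecMulVec (star v) v)
    (Z : Matrix (Fin N × Fin N) (Fin N × Fin N) ℂ)
    (hZ : Z = ((α : ℂ))⁻¹ • (A ⊗ₖ P) +
      ((((N : ℝ) / τ - 1 / α : ℝ) : ℂ))⁻¹ •
        ((1 - ((α : ℂ))⁻¹ • A) ⊗ₖ (((τ : ℂ))⁻¹ • 1 - ((α : ℂ))⁻¹ • P)))
    (hZpsd : Z.PosSemidef) :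
    (A - ((((τ - α) / ((N : ℝ) - 1)) : ℝ) : ℂ) • 1).PosSemidef := by
  have hk : (2:ℝ) ≤ (N:ℝ) := by exact_mod_cast hN
  have hk1 : (0:ℝ) < (N:ℝ) - 1 := by linarith
  have hd : (0:ℝ) < (N:ℝ)/τ - 1/α := by
    rw [sub_pos, div_lt_div_iff₀ hα0 hτ0]; linarith
  -- quadratic form of P at star v
  have hPy : star (star v) ⬝ᵥ P.mulVec (star v) = (star v ⬝ᵥ v) * (star v ⬝ᵥ v) := by
    subst hP
    simp only [star_star, mulVec, vecMulVec_apply, dotProduct, Pi.star_apply]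
    rw [Fintype.sum_mul_sum]
    refine Finset.sum_congr rfl fun i _ => ?_
    rw [Finset.mul_sum]
    exact Finset.sum_congr rfl fun j _ => by ring
  have hvy : star (star v) ⬝ᵥ (star v) = 1 := by
    rw [star_star, dotProduct_comm]; exact hv
  have hPy' : v ⬝ᵥ P.mulVec (star v) = 1 := by
    have := hPy; rwa [star_star, hv, mul_one] at this
  have hvy' : v ⬝ᵥ star v = 1 := by rw [dotProduct_comm]; exact hv
  rw [posSemidef_iff_dotProduct_mulVec]
  constructor
  · show _ = _
    simp only [conjTranspose_sub, conjTranspose_smul, conjTranspose_one, hA.eq,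
      Complex.star_def, Complex.conj_ofReal]
  intro x
  -- real values of the quadratic forms
  have hQstar : star (star x ⬝ᵥ A.mulVec x) = star x ⬝ᵥ A.mulVec x := by
    rw [← star_dotProduct, star_mulVec, hA.eq, ← dotProduct_mulVec]
  set q : ℝ := (star x ⬝ᵥ A.mulVec x).re with hqdef
  have hq : star x ⬝ᵥ A.mulVec x = (q:ℂ) :=
    (Complex.conj_eq_iff_re.mp hQstar).symm
  set n : ℝ := ∑ i, Complex.normSq (x i) with hndef
  have hn : star x ⬝ᵥ x = (n:ℂ) := by
    simp only [dotProduct, Pi.star_apply, hndef]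
    push_cast
    exact Finset.sum_congr rfl fun i _ => (Complex.normSq_eq_conj_mul_self).symm ▸ rfl
  have hn0 : 0 ≤ n := Finset.sum_nonneg fun i _ => Complex.normSq_nonneg _
  -- evaluate Z's quadratic form on x ⊗ conj v
  have key := hZpsd.dotProduct_mulVec_nonneg (fun p : Fin N × Fin N => x p.1 * (star v) p.2)
  rw [hZ] at key
  simp only [add_mulVec, smul_mulVec, dotProduct_add, dotProduct_smul,
    quad_kron] at key
  have e1 : star x ⬝ᵥ (1 - ((α:ℂ))⁻¹ • A).mulVec x = (n:ℂ) - ((α:ℝ):ℂ)⁻¹ * (q:ℂ) := by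
    simp [sub_mulVec, smul_mulVec, one_mulVec, hq, hn, smul_eq_mul]
  have e2 : star (star v) ⬝ᵥ (((τ:ℂ))⁻¹ • 1 - ((α:ℂ))⁻¹ • P).mulVec (star v)
      = ((τ:ℝ):ℂ)⁻¹ - ((α:ℝ):ℂ)⁻¹ := by
    simp [sub_mulVec, smul_mulVec, one_mulVec, hPy', hvy', smul_eq_mul]
  rw [hq, hPy, hv, e1, e2] at key
  have key' : (0:ℂ) ≤ (((α⁻¹*q + ((N:ℝ)/τ - 1/α)⁻¹*((n - α⁻¹*q)*(τ⁻¹-α⁻¹))) : ℝ) : ℂ) := by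
    convert key using 1
    push_cast
    simp only [smul_eq_mul]
    ring
  rw [Complex.zero_le_real] at key'
  -- target quadratic form
  have hgoal : star x ⬝ᵥ (A - ((((τ - α) / ((N : ℝ) - 1)) : ℝ) : ℂ) • 1).mulVec x
      = ((q - (τ - α)/((N:ℝ)-1)*n : ℝ) : ℂ) := by
    simp only [sub_mulVec, smul_mulVec, one_mulVec, dotProduct_sub,
      dotProduct_smul, hq, hn, smul_eq_mul]
    push_cast
    ring
  rw [hgoal, Complex.zero_le_real]
  -- real arithmetic
  have hD : (0:ℝ) < (N:ℝ)*α - τ := by linarith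
  have hdform : (N:ℝ)/τ - 1/α = ((N:ℝ)*α - τ)/(τ*α) := by
    field_simp
  rw [hdform] at key'
  have h1 : 0 ≤ (α⁻¹*q + (((N:ℝ)*α - τ)/(τ*α))⁻¹*((n - α⁻¹*q)*(τ⁻¹-α⁻¹))) *
      (α^2 * τ * (((N:ℝ)*α - τ)/(τ*α))) :=
    mul_nonneg key' (by positivity)
  have h2 : (α⁻¹*q + (((N:ℝ)*α - τ)/(τ*α))⁻¹*((n - α⁻¹*q)*(τ⁻¹-α⁻¹))) *
      (α^2 * τ * (((N:ℝ)*α - τ)/(τ*α)))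
      = α * (q*((N:ℝ)-1) + n*(α-τ)) := by
    have hD' : α * (N:ℝ) - τ ≠ 0 := by rw [mul_comm]; exact hD.ne'
    field_simp
    ring
  rw [h2] at h1
  have h3 : 0 ≤ q*((N:ℝ)-1) + n*(α-τ) := nonneg_of_mul_nonneg_right (by linarith [h1]) hα0
  rw [sub_nonneg, div_mul_eq_mul_div, div_le_iff₀ hk1]
  nlinarith [h3]
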